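/- arXiv:1801.02713 — 3 statements merged into one kernel-verified Lean document; each statement's English description precedes it below -/
import Mathlib

section
/- Let F be a field, let m ≥ 1 be an integer, and let c : ℕ → F be a sequence of inputs (with indices starting at 1). Let S : ℕ → Fin m → F be the circular shift-register state defined by S 0 j = 0 for all j, S k 0 = c k + S (k−1) (m−1) for k ≥ 1, and S k j = S (k−1) (j−1) for k ≥ 1 and 1 ≤ j ≤ m−1. Then for every k ≥ 0 and every register index 0 ≤ j ≤ m−1, S k j = Σ_{i : 1 ≤ i ≤ k, i ≡ k − j (mod m)} c i. -/
open Finset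

/-- The circular shift-register state for inputs `c : ℕ → F` (indices starting at 1) and
`m` registers: `S 0 j = 0`, `S k 0 = c k + S (k−1) (m−1)` for `k ≥ 1`, and
`S k j = S (k−1) (j−1)` for `k ≥ 1`, `1 ≤ j ≤ m−1`.  (In `Fin m`, `0 - 1 = m - 1`, so the
single equation below covers both cases.) -/
def shiftState {F : Type*} [Field F] (m : ℕ) [NeZero m] (c : ℕ → F) :
    ℕ → Fin m → F
  | 0, _ => 0
  | (k + 1), j =>
      if j = 0 then c (k + 1) + shiftState m c k (j - 1)
      else shiftState m c k (j - 1)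

/-- closed form for the circular shift-register state: register `j` at time
`k` holds the sum of all past inputs in the residue class `k − j (mod m)`:
`S k j = Σ_{1 ≤ i ≤ k, i ≡ k − j (mod m)} c i`. -/
theorem shiftState_eq_residue_sum
    {F : Type*} [Field F] (m : ℕ) [NeZero m] (c : ℕ → F) :
    ∀ (k : ℕ) (j : Fin m),
      shiftState m c k j =
        ∑ i ∈ (Finset.Icc 1 k).filter
            (fun i : ℕ => ((i : ZMod m)) = (k : ZMod m) - (j.val : ZMod m)), c i := by
  have hm : 1 ≤ m := Nat.one_le_iff_ne_zero.mpr (NeZero.ne m)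
  intro k
  induction k with
  | zero => intro j; simp [shiftState]
  | succ k ih =>
    intro j
    have hsub : (((j - 1 : Fin m).val : ZMod m)) = (j.val : ZMod m) - 1 := by
      have h1 : (j - 1 : Fin m).val = (j.val + (m - 1)) % m := by
        rw [Fin.sub_def, Fin.val_one']
        rcases eq_or_lt_of_le hm with h | h
        · simp [← h, Nat.mod_one]
        · rw [Nat.mod_eq_of_lt h]
          show (m - 1 + j.val) % m = (j.val + (m - 1)) % m
          congr 1
          omega
      rw [h1, ZMod.natCast_mod, Nat.cast_add, Nat.cast_sub hm]
      simp [ZMod.natCast_self]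
      ring
    have hres : (↑(k+1) : ZMod m) - (j.val : ZMod m)
        = (k : ZMod m) - (((j - 1 : Fin m).val : ZMod m)) := by
      rw [hsub]; push_cast; ring
    have hIcc : Finset.Icc 1 (k+1) = insert (k+1) (Finset.Icc 1 k) := by
      rw [← Finset.insert_Icc_right_eq_Icc_add_one (by omega)]
    by_cases hj : j = 0
    · subst hj
      have hmem : (((k+1 : ℕ) : ZMod m)) = (↑(k+1) : ZMod m) - ((0 : Fin m).val : ZMod m) := by
        simp
      rw [show shiftState m c (k+1) 0 = c (k+1) + shiftState m c k (0 - 1) from rfl,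
        ih, hIcc, Finset.filter_insert, if_pos hmem,
        Finset.sum_insert (by simp)]
      congr 2
      apply Finset.filter_congr
      intro i _
      rw [hres]
    · have hnot : ¬ (((k+1 : ℕ) : ZMod m)) = (↑(k+1) : ZMod m) - (j.val : ZMod m) := by
        intro h
        have h0 : (j.val : ZMod m) = 0 := by linear_combination h
        have hdvd := (ZMod.natCast_eq_zero_iff _ _).mp h0
        have hz := Nat.eq_zero_of_dvd_of_lt hdvd j.isLt
        exact hj (Fin.ext (by simp [hz]))
      rw [show shiftState m c (k+1) j = shiftState m c k (j - 1) from
          (by simp [shiftState, hj]),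
        ih, hIcc, Finset.filter_insert, if_neg hnot]
      congr 1
      apply Finset.filter_congr
      intro i _
      rw [hres]
end

section
/- Let F be a field, let m ≥ 1 and N ≥ 0 be integers, let c : ℕ → F be a sequence of inputs, and let S : ℕ → Fin m → F be the circular shift-register state for c. Then S N j = 0 for all registers j if and only if for every residue class r modulo m, Σ_{i : 1 ≤ i ≤ N, i ≡ r (mod m)} c i = 0. -/
open Finset

lemma fin_sub_one_cast (m : ℕ) [NeZero m] (j : Fin m) :
    (((j - 1 : Fin m) : ℕ) : ZMod m) = ((j : ℕ) : ZMod m) - 1 := by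
  have hm : 0 < m := Nat.pos_of_ne_zero (NeZero.ne m)
  rw [Fin.sub_def]
  simp only [Fin.val_mk]
  rw [ZMod.natCast_mod]
  have h1 : (1 : Fin m).val = 1 % m := rfl
  push_cast
  rw [h1]
  have hle : 1 % m ≤ m := le_of_lt (Nat.mod_lt 1 hm)
  rw [Nat.cast_sub hle]
  simp [ZMod.natCast_self, ZMod.natCast_mod]
  ring

lemma shiftState_eq_sum {F : Type*} [Field F] (m : ℕ) [NeZero m] (c : ℕ → F) :
    ∀ (k : ℕ) (j : Fin m), shiftState m c k j =
      ∑ i ∈ (Finset.Icc 1 k).filter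
        (fun i : ℕ => ((i : ZMod m)) = (k : ZMod m) - ((j : ℕ) : ZMod m)), c i := by
  intro k
  induction k with
  | zero => intro j; simp [shiftState]
  | succ k ih =>
    intro j
    have hsplit : Finset.Icc 1 (k + 1) = insert (k + 1) (Finset.Icc 1 k) := by
      ext x
      simp [Finset.mem_Icc, Finset.mem_insert]
      omega
    have hnotmem : (k + 1) ∉ Finset.Icc 1 k := by simp
    have hres : ((k : ℕ) : ZMod m) - (((j - 1 : Fin m) : ℕ) : ZMod m)
        = ((k + 1 : ℕ) : ZMod m) - ((j : ℕ) : ZMod m) := by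
      rw [fin_sub_one_cast]
      push_cast
      ring
    by_cases hj : j = 0
    · subst hj
      have hmem : (((k + 1 : ℕ) : ZMod m)) = ((k + 1 : ℕ) : ZMod m) - ((0 : Fin m) : ℕ) := by
        simp
      rw [shiftState]
      simp only [if_pos rfl]
      rw [ih]
      rw [hsplit, Finset.filter_insert]
      rw [if_pos hmem]
      rw [Finset.sum_insert (fun h => hnotmem (Finset.mem_of_mem_filter _ h))]
      rw [hres]
      simp
    · rw [shiftState]
      rw [if_neg hj, ih]
      rw [hsplit, Finset.filter_insert]
      have hne : ¬ (((k + 1 : ℕ) : ZMod m) = ((k + 1 : ℕ) : ZMod m) - ((j : ℕ) : ZMod m)) := by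
        intro h
        have : ((j : ℕ) : ZMod m) = 0 := by linear_combination h
        have hv : ((((j : ℕ) : ZMod m)).val) = (j : ℕ) :=
          ZMod.val_cast_of_lt j.isLt
        rw [this] at hv
        simp at hv
        exact hj (Fin.ext (by simpa using hv.symm))
      rw [if_neg hne, hres]

/-- the tail-biting termination condition.  The shift register returns to
the all-zero state at time `N` if and only if, for every residue class `r` modulo `m`,
`Σ_{1 ≤ i ≤ N, i ≡ r (mod m)} c i = 0`. -/
theorem shiftState_eq_zero_iff_residue_sums_eq_zero
    {F : Type*} [Field F] (m : ℕ) [NeZero m] (N : ℕ) (c : ℕ → F) :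
    (∀ j : Fin m, shiftState m c N j = 0) ↔
      (∀ r : ZMod m,
        ∑ i ∈ (Finset.Icc 1 N).filter (fun i : ℕ => ((i : ZMod m)) = r), c i = 0) := by
  constructor
  · intro h r
    set x : ZMod m := (N : ZMod m) - r with hx
    refine Eq.trans ?_ (Eq.trans (shiftState_eq_sum m c N ⟨x.val, ZMod.val_lt x⟩).symm
      (h ⟨x.val, ZMod.val_lt x⟩))
    congr 1
    ext i
    simp only [Finset.mem_filter]
    have : ((x.val : ℕ) : ZMod m) = x := ZMod.natCast_rightInverse x
    constructor
    · rintro ⟨hi, h2⟩; exact ⟨hi, by rw [h2, this, hx]; ring⟩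
    · rintro ⟨hi, h2⟩; exact ⟨hi, by rw [h2, this, hx]; ring⟩
  · intro h j
    rw [shiftState_eq_sum]
    exact h _
end

section
/- Let F be a finite field, let (Ω, P) be a probability space, let (c_i)_{i ≥ 1} be mutually independent F-valued random variables, let m ≥ 1, and let S be the circular shift-register state computed pathwise from the inputs. Let h : Fin m → F be any coefficients and define, for k ≥ 1, the output random variable b_k = c_k + Σ_{j=0}^{m−1} h j · S (k−1) j. Then for every ω ∈ F, P(b_k = ω) = Σ_{u : Fin m → F} P(c_k = ω − Σ_{j=0}^{m−1} h j · u j) · Π_{j=0}^{m−1} P(S (k−1) j = u j); that is, the probability mass function of b_k is the iterated group convolution of the probability mass function of c_k with the h_j-permuted probability mass functions of the register contents S (k−1) j. -/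
open MeasureTheory ProbabilityTheory Finset

/-- The index block feeding register `j` at time `k`: `shiftState m c k j = ∑ i ∈ blk m k j, c (i+1)`. -/
def blk (m : ℕ) [NeZero m] : ℕ → Fin m → Finset ℕ
  | 0, _ => ∅
  | (k+1), j => if j = 0 then insert k (blk m k (j-1)) else blk m k (j-1)

lemma blk_subset (m : ℕ) [NeZero m] : ∀ k j, blk m k j ⊆ Finset.range k
  | 0, j => by simp [blk]
  | (k+1), j => by
      unfold blk
      split <;> intro i hi
      · rcases Finset.mem_insert.1 hi with rfl | hi
        · simp
        · exact Finset.range_subset_range.2 (Nat.le_succ k) (blk_subset m k _ hi)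
      · exact Finset.range_subset_range.2 (Nat.le_succ k) (blk_subset m k _ hi)

private lemma modeq_succ_iff {a b m : ℕ} : (a + 1) % m = (b + 1) % m ↔ a % m = b % m :=
  ⟨fun h => Nat.ModEq.add_right_cancel' 1 h, fun h => Nat.ModEq.add_right 1 h⟩

lemma mem_blk {m : ℕ} [NeZero m] : ∀ (k : ℕ) (j : Fin m) (i : ℕ),
    i ∈ blk m k j ↔ i < k ∧ (i + (j : ℕ) + 1) % m = (k : ℕ) % m
  | 0, j, i => by simp [blk]
  | (k+1), j, i => by
      obtain ⟨m', rfl⟩ := Nat.exists_eq_succ_of_ne_zero (NeZero.ne m)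
      unfold blk
      split
      · next hj =>
        subst hj
        rw [Finset.mem_insert, mem_blk k _ i]
        have hv : (((0 : Fin (m'+1)) - 1 : Fin (m'+1)) : ℕ) = m' := by
          rw [Fin.coe_sub_one]; simp
        rw [hv]
        have e1 : i + m' + 1 = i + (m' + 1) := by ring
        rw [e1, Nat.add_mod_right]
        simp only [Fin.val_zero, Nat.add_zero]
        rw [modeq_succ_iff]
        constructor
        · rintro (rfl | ⟨hik, hmod⟩)
          · exact ⟨Nat.lt_succ_self _, rfl⟩
          · exact ⟨Nat.lt_succ_of_lt hik, hmod⟩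
        · rintro ⟨hik, hmod⟩
          rcases Nat.lt_succ_iff_lt_or_eq.1 hik with hik | rfl
          · exact Or.inr ⟨hik, hmod⟩
          · exact Or.inl rfl
      · next hj =>
        rw [mem_blk k _ i]
        have hv : ((j - 1 : Fin (m'+1)) : ℕ) = (j : ℕ) - 1 := by
          rw [Fin.coe_sub_one, if_neg hj]
        rw [hv]
        have hj1 : 1 ≤ (j : ℕ) := by
          rcases Nat.eq_zero_or_pos (j : ℕ) with h | h
          · exact absurd (Fin.ext h) hj
          · exact h
        have harith : i + ((j:ℕ) - 1) + 1 = i + (j:ℕ) := by omega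
        rw [harith]
        have key : ∀ x : ℕ, (x + (j:ℕ)) % (m'+1) = k % (m'+1) ↔
            (x + (j:ℕ) + 1) % (m'+1) = (k+1) % (m'+1) := by
          intro x; exact modeq_succ_iff.symm
        constructor
        · rintro ⟨hik, hmod⟩
          exact ⟨Nat.lt_succ_of_lt hik, (key i).1 hmod⟩
        · rintro ⟨hik, hmod⟩
          have hmod' := (key i).2 hmod
          have hik' : i < k := by
            rcases Nat.lt_succ_iff_lt_or_eq.1 hik with h | rfl
            · exact h
            · exfalso
              have h1 : Nat.ModEq (m'+1) ((j:ℕ) + i) (0 + i) := by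
                rw [Nat.add_comm (j:ℕ) i, Nat.zero_add]; exact hmod'
              have h2 : Nat.ModEq (m'+1) (j:ℕ) 0 := Nat.ModEq.add_right_cancel' i h1
              have h3 : (j:ℕ) % (m'+1) = 0 := by
                simpa [Nat.ModEq] using h2
              rw [Nat.mod_eq_of_lt j.isLt] at h3
              exact hj (Fin.ext h3)
          exact ⟨hik', hmod'⟩

lemma blk_disjoint {m : ℕ} [NeZero m] (k : ℕ) {j j' : Fin m} (hjj : j ≠ j') :
    Disjoint (blk m k j) (blk m k j') := by
  rw [Finset.disjoint_left]
  intro i hi hi'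
  rw [mem_blk] at hi hi'
  have h1 : (i + (j:ℕ) + 1) % m = (i + (j':ℕ) + 1) % m := hi.2.trans hi'.2.symm
  have h2 : (j:ℕ) % m = (j':ℕ) % m := by
    have e : ∀ x : ℕ, i + x + 1 = x + (i + 1) := by intro x; ring
    rw [e, e] at h1
    exact Nat.ModEq.add_right_cancel' (i+1) h1
  rw [Nat.mod_eq_of_lt j.isLt, Nat.mod_eq_of_lt j'.isLt] at h2
  exact hjj (Fin.ext h2)

lemma shift_sum {F : Type*} [Field F] (m : ℕ) [NeZero m] (c : ℕ → F) :
    ∀ k j, shiftState m c k j = ∑ i ∈ blk m k j, c (i + 1)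
  | 0, j => by simp [shiftState, blk]
  | (k+1), j => by
      unfold shiftState blk
      split
      · have hk : k ∉ blk m k (j-1) := fun h =>
          absurd (Finset.mem_range.1 (blk_subset m k _ h)) (lt_irrefl k)
        rw [Finset.sum_insert hk, shift_sum m c k]
      · exact shift_sum m c k _

section Prob

variable {Ω : Type*} [MeasureSpace Ω] [IsProbabilityMeasure (ℙ : Measure Ω)]
    {F : Type*} [Field F] [Fintype F]
    [MeasurableSpace F] [MeasurableSingletonClass F]

/-- Extend a function on a finset to ℕ by zero. -/
noncomputable def extS (S : Finset ℕ) (x : S → F) : ℕ → F :=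
  fun i => if h : i ∈ S then x ⟨i, h⟩ else 0

lemma extS_restrict (S : Finset ℕ) (c : ℕ → Ω → F) (a : Ω) {i : ℕ} (hi : i ∈ S) :
    extS S (fun i : S => c ((i : ℕ) + 1) a) i = c (i + 1) a := by
  simp [extS, hi]

/-- Key independence step: two events determined by the inputs over disjoint index
finsets have multiplicative probabilities. -/
lemma indep_blocks (c : ℕ → Ω → F) (hc : ∀ i, Measurable (c i))
    (hindep : iIndepFun (m := fun _ => (inferInstance : MeasurableSpace F))
      (fun i : ℕ => c (i + 1)) ℙ)
    (S T : Finset ℕ) (hST : Disjoint S T) (A : Set (S → F)) (B : Set (T → F)) :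
    ℙ ((fun a (i : S) => c ((i : ℕ) + 1) a) ⁻¹' A ∩
        (fun a (i : T) => c ((i : ℕ) + 1) a) ⁻¹' B) =
      ℙ ((fun a (i : S) => c ((i : ℕ) + 1) a) ⁻¹' A) *
        ℙ ((fun a (i : T) => c ((i : ℕ) + 1) a) ⁻¹' B) := by
  have h := hindep.indepFun_finset S T hST (fun i => hc (i + 1))
  exact (indepFun_iff_measure_inter_preimage_eq_mul.1 h) A B
    (Set.to_countable A).measurableSet (Set.to_countable B).measurableSet

lemma measurable_restrict (c : ℕ → Ω → F) (hc : ∀ i, Measurable (c i)) (S : Finset ℕ) :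
    Measurable (fun a (i : S) => c ((i : ℕ) + 1) a) :=
  measurable_pi_lambda _ (fun i => hc _)

end Prob

/-- Theorem 1, dual encoder for SISO MAP forward decoding: for mutually
independent inputs `(c_i)_{i ≥ 1}`, coefficients `h : Fin m → F`, and output
`b_k = c_k + Σ_j h j · S (k−1) j`, the pmf of `b_k` is the iterated group convolution of
the pmf of `c_k` with the permuted pmfs of the registers:
`P(b_k = ω) = Σ_{u ∈ F^m} P(c_k = ω − Σ_j h j · u j) · Π_j P(S (k−1) j = u j)`. -/
theorem output_pmf_eq_iterated_convolution
    {Ω : Type*} [MeasureSpace Ω] [IsProbabilityMeasure (ℙ : Measure Ω)]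
    {F : Type*} [Field F] [Fintype F]
    [MeasurableSpace F] [MeasurableSingletonClass F]
    (m : ℕ) [NeZero m] (c : ℕ → Ω → F) (hc : ∀ i, Measurable (c i))
    (hindep : iIndepFun (m := fun _ => (inferInstance : MeasurableSpace F))
      (fun i : ℕ => c (i + 1)) ℙ)
    (h : Fin m → F) (k : ℕ) (hk : 1 ≤ k) :
    ∀ ω : F,
      ℙ {a | c k a + ∑ j : Fin m, h j * shiftState m (fun i => c i a) (k - 1) j = ω} =
        ∑ u : Fin m → F,
          ℙ {a | c k a = ω - ∑ j : Fin m, h j * u j} *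
            ∏ j : Fin m, ℙ {a | shiftState m (fun i => c i a) (k - 1) j = u j} := by
  intro ω
  obtain ⟨K, rfl⟩ : ∃ K, k = K + 1 := ⟨k - 1, by omega⟩
  have hK1 : K + 1 - 1 = K := rfl
  rw [hK1]
  -- abbreviations
  set R : (S : Finset ℕ) → Ω → (S → F) := fun S a (i : S) => c ((i : ℕ) + 1) a with hR
  -- shiftState as block sums
  have hshift : ∀ (a : Ω) (j : Fin m),
      shiftState m (fun i => c i a) K j = ∑ i ∈ blk m K j, c (i + 1) a := by
    intro a j; exact shift_sum m _ K j
  -- register events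
  set Es : Fin m → F → Set Ω :=
    fun j v => {a | shiftState m (fun i => c i a) K j = v} with hEs
  -- register event as a preimage over its block
  have hEs_pre : ∀ (j : Fin m) (v : F),
      Es j v = R (blk m K j) ⁻¹' {x | (∑ i ∈ blk m K j, extS (blk m K j) x i) = v} := by
    intro j v
    ext a
    simp only [hEs, Set.mem_setOf_eq, Set.mem_preimage, hshift a j]
    constructor
    · intro hv
      show (∑ i ∈ blk m K j, extS (blk m K j) (R (blk m K j) a) i) = v
      rw [Finset.sum_congr rfl (fun i hi => extS_restrict (blk m K j) c a hi)]
      exact hv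
    · intro hv
      have := Finset.sum_congr rfl (fun i hi => extS_restrict (blk m K j) c a hi)
      rw [this] at hv
      exact hv
  have hEs_meas : ∀ (j : Fin m) (v : F), MeasurableSet (Es j v) := by
    intro j v
    rw [hEs_pre]
    exact (measurable_restrict c hc _) (Set.to_countable _).measurableSet
  have hEc_meas : ∀ v : F, MeasurableSet {a | c (K+1) a = v} := by
    intro v
    exact (hc (K+1)) (measurableSet_singleton v)
  -- Step 2: product formula via peeling
  have peel : ∀ (v : F) (u : Fin m → F) (T : Finset (Fin m)),
      ℙ ({a | c (K+1) a = v} ∩ ⋂ j ∈ T, Es j (u j)) =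
        ℙ {a | c (K+1) a = v} * ∏ j ∈ T, ℙ (Es j (u j)) := by
    intro v u T
    induction T using Finset.induction_on with
    | empty => simp
    | @insert j₀ T hj₀ ih =>
      -- split off j₀
      have hset : ({a | c (K+1) a = v} ∩ ⋂ j ∈ insert j₀ T, Es j (u j)) =
          (({a | c (K+1) a = v} ∩ ⋂ j ∈ T, Es j (u j)) ∩ Es j₀ (u j₀)) := by
        rw [Finset.set_biInter_insert]
        ext a; simp only [Set.mem_inter_iff, Set.mem_iInter]; tauto
      rw [hset]
      -- big index set
      set S : Finset ℕ := insert K (T.biUnion (fun j => blk m K j)) with hS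
      have hKS : K ∈ S := Finset.mem_insert_self _ _
      have hblkS : ∀ j ∈ T, blk m K j ⊆ S := fun j hj =>
        fun i hi => Finset.mem_insert_of_mem (Finset.mem_biUnion.2 ⟨j, hj, hi⟩)
      -- left event as preimage over S
      have hleft : ({a | c (K+1) a = v} ∩ ⋂ j ∈ T, Es j (u j)) =
          R S ⁻¹' {x | extS S x K = v ∧
            ∀ j ∈ T, (∑ i ∈ blk m K j, extS S x i) = u j} := by
        ext a
        simp only [Set.mem_inter_iff, Set.mem_setOf_eq, Set.mem_iInter, Set.mem_preimage]
        have h1 : extS S (R S a) K = c (K+1) a := extS_restrict S c a hKS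
        have h2 : ∀ j ∈ T, (∑ i ∈ blk m K j, extS S (R S a) i) = ∑ i ∈ blk m K j, c (i+1) a :=
          fun j hj => Finset.sum_congr rfl (fun i hi => extS_restrict S c a (hblkS j hj hi))
        constructor
        · rintro ⟨hcv, hT⟩
          refine ⟨by rw [h1]; exact hcv, fun j hj => ?_⟩
          rw [h2 j hj]
          have := hT j hj
          simpa [hEs, Set.mem_setOf_eq, hshift a j] using this
        · rintro ⟨hcv, hT⟩
          refine ⟨by rw [h1] at hcv; exact hcv, fun j hj => ?_⟩
          have := hT j hj
          rw [h2 j hj] at this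
          simpa [hEs, Set.mem_setOf_eq, hshift a j] using this
      -- disjointness
      have hdisj : Disjoint S (blk m K j₀) := by
        rw [hS, Finset.disjoint_left]
        intro i hi hib
        rcases Finset.mem_insert.1 hi with rfl | hi
        · exact absurd (Finset.mem_range.1 (blk_subset m _ j₀ hib)) (lt_irrefl _)
        · obtain ⟨j, hjT, hij⟩ := Finset.mem_biUnion.1 hi
          have hne : j ≠ j₀ := fun hh => hj₀ (hh ▸ hjT)
          exact (Finset.disjoint_left.1 (blk_disjoint K hne)) hij hib
      rw [hleft, hEs_pre j₀ (u j₀),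
        indep_blocks c hc hindep S (blk m K j₀) hdisj _ _,
        ← hleft, ← hEs_pre j₀ (u j₀), ih,
        Finset.prod_insert hj₀]
      ring
  -- Step 1: partition the output event
  have hpart : {a | c (K+1) a + ∑ j : Fin m, h j * shiftState m (fun i => c i a) K j = ω} =
      ⋃ u : Fin m → F,
        ({a | c (K+1) a = ω - ∑ j : Fin m, h j * u j} ∩ ⋂ j : Fin m, Es j (u j)) := by
    ext a
    simp only [Set.mem_setOf_eq, Set.mem_iUnion, Set.mem_inter_iff, Set.mem_iInter, hEs]
    constructor
    · intro hsum
      refine ⟨fun j => shiftState m (fun i => c i a) K j, ?_, fun j => rfl⟩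
      rw [eq_sub_iff_add_eq]; exact hsum
    · rintro ⟨u, hcv, hu⟩
      have : ∀ j : Fin m, shiftState m (fun i => c i a) K j = u j := hu
      rw [show (∑ j : Fin m, h j * shiftState m (fun i => c i a) K j)
            = ∑ j : Fin m, h j * u j from Finset.sum_congr rfl (fun j _ => by rw [this j])]
      rw [eq_sub_iff_add_eq] at hcv; exact hcv
  rw [hpart]
  have hdisjU : Pairwise (Function.onFun Disjoint (fun u : Fin m → F =>
      ({a | c (K+1) a = ω - ∑ j : Fin m, h j * u j} ∩ ⋂ j : Fin m, Es j (u j)))) := by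
    intro u u' huu
    rw [Function.onFun, Set.disjoint_left]
    rintro a ⟨_, ha⟩ ⟨_, ha'⟩
    apply huu
    funext j
    have h1 : shiftState m (fun i => c i a) K j = u j := Set.mem_iInter.1 ha j
    have h2 : shiftState m (fun i => c i a) K j = u' j := Set.mem_iInter.1 ha' j
    rw [← h1, h2]
  have hmeasU : ∀ u : Fin m → F, MeasurableSet
      ({a | c (K+1) a = ω - ∑ j : Fin m, h j * u j} ∩ ⋂ j : Fin m, Es j (u j)) :=
    fun u => (hEc_meas _).inter (MeasurableSet.iInter (fun j => hEs_meas j (u j)))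
  rw [measure_iUnion hdisjU hmeasU, tsum_fintype]
  refine Finset.sum_congr rfl (fun u _ => ?_)
  have := peel (ω - ∑ j : Fin m, h j * u j) u Finset.univ
  simp only [Finset.mem_univ, Set.iInter_true, Finset.prod_const] at this
  rw [this]
end
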